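/- Suppose t̃_k ∈ Ω for all k ∈ {1,…,m}, and suppose δ > 0 is such that ‖Sv‖₂ ≥ ‖v‖₂/δ for all v ∈ ℂ^N. Let b = f̃ + d ∈ ℂ^m and let f♯ be any minimizer of ‖Sh − b‖₂ over h ∈ ℂ^N. Then ‖f − f♯‖₂ ≤ 2δ‖d‖₂ + 2δ√m Σ_{|ℓ|>Ñ} |c_ℓ|. -/

import Mathlib

open scoped BigOperators
open MeasureTheory Matrix

noncomputable section

/-- The complex exponential `e(x) = exp(2πix)`. -/
def ce (x : ℝ) : ℂ := Complex.exp (2 * Real.pi * Complex.I * x)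

/-- Half-bandwidth `Ñ = (N-1)/2`. -/
def Nt (N : ℕ) : ℤ := ((N : ℤ) - 1) / 2

/-- Uniform grid point `t_p = (p-1)/N - 1/2` (zero-based index). -/
def tg (N : ℕ) (p : Fin N) : ℝ := (p : ℝ) / N - 1 / 2

/-- Dirichlet interpolation matrix `S ∈ ℂ^{m×N}`. -/
def dirS (N m : ℕ) (tt : Fin m → ℝ) : Matrix (Fin m) (Fin N) ℂ :=
  fun k p => (N : ℂ)⁻¹ * ∑ u ∈ Finset.Icc (-(Nt N)) (Nt N), ce (u * (tg N p - tt k))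

/-- Centered DFT matrix `F ∈ ℂ^{N×N}`. -/
def dftF (N : ℕ) : Matrix (Fin N) (Fin N) ℂ :=
  fun p u => ((Real.sqrt N : ℂ))⁻¹ * ce (-(tg N p) * ((u : ℤ) - Nt N))

/-- DFT-incoherence parameter of `Ψ`. -/
def dftIncoh (N n : ℕ) (Ψ : Matrix (Fin N) (Fin n) ℂ) : ℝ :=
  ⨆ ℓ : Fin n, ∑ k : Fin N, ‖((dftF N)ᴴ * Ψ) k ℓ‖

/-- Euclidean norm on `ℂ^n`. -/
def norm2 {n : ℕ} (v : Fin n → ℂ) : ℝ := Real.sqrt (∑ i, ‖v i‖ ^ 2)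

/-- `ℓ₁` norm on `ℂ^n`. -/
def norm1 {n : ℕ} (v : Fin n → ℂ) : ℝ := ∑ i, ‖v i‖

/-- `v` has at most `s` nonzero entries. -/
def Sparse {n : ℕ} (s : ℕ) (v : Fin n → ℂ) : Prop :=
  (Finset.univ.filter fun i => v i ≠ 0).card ≤ s

/-- Error of the best `s`-sparse approximation of `g` in `ℓ₁`. -/
def sperr {n : ℕ} (s : ℕ) (g : Fin n → ℂ) : ℝ :=
  sInf {r : ℝ | ∃ h : Fin n → ℂ, Sparse s h ∧ r = norm1 (fun i => h i - g i)}

/-- The 1-periodic signal with Fourier coefficients `c`. -/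
def fcont (c : ℤ → ℂ) (x : ℝ) : ℂ := ∑' ℓ : ℤ, c ℓ * ce (ℓ * x)

/-- Tail `∑_{|ℓ|>Ñ} |c_ℓ|` of the Fourier coefficients. -/
def tailSum (N : ℕ) (c : ℤ → ℂ) : ℝ :=
  ∑' ℓ : ℤ, if Nt N < |ℓ| then ‖c ℓ‖ else 0

/-- The distribution `𝒟` satisfies the deviation model with parameter `θ`. -/
def DevModel (N m : ℕ) (𝒟 : Measure ℝ) (θ : ℝ) : Prop :=
  ∀ j : ℤ, j ≠ 0 → (|j| : ℝ) ≤ 2 * ((N : ℝ) - 1) / m →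
    (2 * N / m) * ‖∫ x, ce (((j * m : ℤ) : ℝ) * x) ∂𝒟‖ ≤ θ

/-- The random nonuniform sample points `t̃_k = (k-1)/m - 1/2 + Δ_k`. -/
def samplePts {Ω : Type*} (m : ℕ) (Δ : Fin m → Ω → ℝ) (ω : Ω) : Fin m → ℝ :=
  fun k => (k : ℝ) / m - 1 / 2 + Δ k ω

end


/- ===== auxiliary lemmas ===== -/

noncomputable section

lemma ce_add (x y : ℝ) : ce (x + y) = ce x * ce y := by
  simp only [ce, ← Complex.exp_add]; congr 1; push_cast; ring

lemma abs_ce (x : ℝ) : ‖ce x‖ = 1 := by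
  rw [ce, Complex.norm_exp]
  have : (2 * ↑Real.pi * Complex.I * ↑x).re = 0 := by simp [Complex.mul_re]
  simp [this]

lemma ce_int (n : ℤ) : ce n = 1 := by
  rw [ce, show (2 * ↑Real.pi * Complex.I * (n:ℝ) : ℂ) = n * (2 * ↑Real.pi * Complex.I) by push_cast; ring]
  exact Complex.exp_int_mul_two_pi_mul_I n

lemma ce_zero : ce 0 = 1 := by simpa using ce_int 0

lemma ce_nat_mul (n : ℕ) (x : ℝ) : ce (n * x) = ce x ^ n := by
  rw [ce, ce, ← Complex.exp_nat_mul]; congr 1; push_cast; ring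

lemma ce_eq_one_iff (x : ℝ) : ce x = 1 ↔ ∃ n : ℤ, x = n := by
  rw [ce, Complex.exp_eq_one_iff]
  constructor
  · rintro ⟨n, hn⟩
    refine ⟨n, ?_⟩
    have hpi : (2 * (Real.pi:ℂ) * Complex.I : ℂ) ≠ 0 := by
      have : (Real.pi:ℂ) ≠ 0 := by exact_mod_cast Real.pi_ne_zero
      simp [this, Complex.I_ne_zero]
    have h2 : (x : ℂ) * (2 * (Real.pi:ℂ) * Complex.I) = (n:ℂ) * (2 * (Real.pi:ℂ) * Complex.I) := by
      rw [← hn]; ring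
    have := mul_right_cancel₀ hpi h2
    exact_mod_cast this
  · rintro ⟨n, hn⟩; exact ⟨n, by rw [hn]; push_cast; ring⟩

lemma sum_ce_grid (N : ℕ) (hNpos : 0 < N) (a : ℤ) :
    ∑ p : Fin N, ce (a * tg N p) = if (N:ℤ) ∣ a then (N:ℂ) * ce (-(a:ℝ)/2) else 0 := by
  have hN0 : (N:ℝ) ≠ 0 := Nat.cast_ne_zero.mpr hNpos.ne'
  have hstep : ∀ p : Fin N, ce (a * tg N p) = ce ((a:ℝ)/N) ^ (p:ℕ) * ce (-(a:ℝ)/2) := by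
    intro p
    rw [← ce_nat_mul, ← ce_add]
    congr 1
    rw [tg]
    field_simp
    ring
  rw [Finset.sum_congr rfl (fun p _ => hstep p), ← Finset.sum_mul,
    Fin.sum_univ_eq_sum_range (fun i => ce ((a:ℝ)/N) ^ i)]
  by_cases hdvd : (N:ℤ) ∣ a
  · obtain ⟨b, hb⟩ := hdvd
    have h1 : ce ((a:ℝ)/N) = 1 := by
      have hx : ((a:ℝ)/N) = (b:ℝ) := by rw [hb]; push_cast; field_simp
      rw [hx]; exact_mod_cast ce_int b
    rw [if_pos ⟨b, hb⟩]
    simp [h1]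
  · have h1 : ce ((a:ℝ)/N) ≠ 1 := by
      rw [ne_eq, ce_eq_one_iff]
      rintro ⟨n, hn⟩
      apply hdvd
      refine ⟨n, ?_⟩
      have : (a:ℝ) = N * n := by field_simp at hn; linarith [hn]
      exact_mod_cast this
    rw [geom_sum_eq h1]
    have hNpow : ce ((a:ℝ)/N) ^ N = 1 := by
      rw [← ce_nat_mul]
      have : (N:ℝ) * ((a:ℝ)/N) = (a:ℝ) := by field_simp
      rw [this]; exact ce_int a
    rw [hNpow]
    simp [hdvd]

lemma Nt_two_mul (N : ℕ) (hN : Odd N) : 2 * Nt N + 1 = (N:ℤ) := by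
  obtain ⟨r, hr⟩ := hN
  subst hr
  rw [Nt]
  push_cast
  omega

lemma dirS_ce (N m : ℕ) (hNpos : 0 < N) (tt : Fin m → ℝ) (ℓ : ℤ) (k : Fin m) :
    ∑ p : Fin N, dirS N m tt k p * ce (ℓ * tg N p)
      = ∑ u ∈ Finset.Icc (-(Nt N)) (Nt N),
          if (N:ℤ) ∣ (u + ℓ) then ce (-(((u + ℓ : ℤ)):ℝ)/2) * ce (-(u:ℝ) * tt k) else 0 := by
  have hNC : (N:ℂ) ≠ 0 := Nat.cast_ne_zero.mpr hNpos.ne'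
  have key : ∀ p : Fin N, dirS N m tt k p * ce (ℓ * tg N p)
      = ∑ u ∈ Finset.Icc (-(Nt N)) (Nt N),
          (N:ℂ)⁻¹ * ce (-(u:ℝ) * tt k) * ce (((u + ℓ : ℤ):ℝ) * tg N p) := by
    intro p
    rw [dirS, Finset.mul_sum, Finset.sum_mul]
    refine Finset.sum_congr rfl fun u _ => ?_
    rw [mul_assoc, mul_assoc, ← ce_add, ← ce_add]
    congr 2
    push_cast
    ring
  rw [Finset.sum_congr rfl fun p _ => key p, Finset.sum_comm]
  refine Finset.sum_congr rfl fun u _ => ?_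
  rw [← Finset.mul_sum, sum_ce_grid N hNpos (u + ℓ)]
  by_cases hdvd : (N:ℤ) ∣ (u + ℓ)
  · rw [if_pos hdvd, if_pos hdvd]
    field_simp
  · rw [if_neg hdvd, if_neg hdvd, mul_zero]

lemma dirS_ce_low (N m : ℕ) (hN : Odd N) (hNpos : 0 < N) (tt : Fin m → ℝ)
    (ℓ : ℤ) (hℓ : ℓ ∈ Finset.Icc (-(Nt N)) (Nt N)) (k : Fin m) :
    ∑ p : Fin N, dirS N m tt k p * ce (ℓ * tg N p) = ce (ℓ * tt k) := by
  have hNt := Nt_two_mul N hN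
  rw [Finset.mem_Icc] at hℓ
  rw [dirS_ce N m hNpos tt ℓ k]
  rw [Finset.sum_eq_single_of_mem (-ℓ) (by rw [Finset.mem_Icc]; omega)
    (fun u hu hne => by
      rw [Finset.mem_Icc] at hu
      rw [if_neg]
      intro hdvd
      have h0 : u + ℓ = 0 := Int.eq_zero_of_dvd_of_natAbs_lt_natAbs hdvd (by omega)
      omega)]
  rw [if_pos (by simp)]
  norm_num [ce_zero]

lemma abs_dirS_ce (N m : ℕ) (hN : Odd N) (hNpos : 0 < N) (tt : Fin m → ℝ) (ℓ : ℤ) (k : Fin m) :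
    ‖∑ p : Fin N, dirS N m tt k p * ce (ℓ * tg N p)‖ ≤ 1 := by
  have hNt := Nt_two_mul N hN
  rw [dirS_ce N m hNpos tt ℓ k]
  calc ‖∑ u ∈ Finset.Icc (-(Nt N)) (Nt N),
          if (N:ℤ) ∣ (u + ℓ) then ce (-(((u + ℓ : ℤ)):ℝ)/2) * ce (-(u:ℝ) * tt k) else 0‖
      ≤ ∑ u ∈ Finset.Icc (-(Nt N)) (Nt N),
          ‖if (N:ℤ) ∣ (u + ℓ) then ce (-(((u + ℓ : ℤ)):ℝ)/2) * ce (-(u:ℝ) * tt k) else 0‖ :=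
        norm_sum_le _ _
    _ = ∑ u ∈ Finset.Icc (-(Nt N)) (Nt N), (if (N:ℤ) ∣ (u + ℓ) then (1:ℝ) else 0) := by
        refine Finset.sum_congr rfl fun u _ => ?_
        by_cases hdvd : (N:ℤ) ∣ (u + ℓ) <;> simp [hdvd, abs_ce]
    _ = ((Finset.Icc (-(Nt N)) (Nt N)).filter (fun u => (N:ℤ) ∣ (u + ℓ))).card := by
        rw [Finset.sum_boole]
    _ ≤ 1 := by
        have : ((Finset.Icc (-(Nt N)) (Nt N)).filter (fun u => (N:ℤ) ∣ (u + ℓ))).card ≤ 1 := by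
          rw [Finset.card_le_one]
          intro a ha b hb
          rw [Finset.mem_filter, Finset.mem_Icc] at ha hb
          obtain ⟨⟨ha1, ha2⟩, hda⟩ := ha
          obtain ⟨⟨hb1, hb2⟩, hdb⟩ := hb
          have hd : (N:ℤ) ∣ (a - b) := by
            have := dvd_sub hda hdb
            simpa using this
          have h0 : a - b = 0 := Int.eq_zero_of_dvd_of_natAbs_lt_natAbs hd (by omega)
          omega
        exact_mod_cast this

variable {N m : ℕ} {c : ℤ → ℂ} {tt : Fin m → ℝ}

lemma summable_ce (hc : Summable fun ℓ : ℤ => ‖c ℓ‖) (x : ℝ) :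
    Summable (fun ℓ : ℤ => c ℓ * ce (ℓ * x)) := by
  apply Summable.of_norm
  refine hc.congr fun ℓ => ?_
  rw [norm_mul, abs_ce, mul_one]

lemma tail_summand_summable (hc : Summable fun ℓ : ℤ => ‖c ℓ‖) :
    Summable (fun ℓ : ℤ => if Nt N < |ℓ| then ‖c ℓ‖ else 0) := by
  refine Summable.of_nonneg_of_le (fun ℓ => by positivity) (fun ℓ => ?_) hc
  by_cases h : Nt N < |ℓ| <;> simp [h, AbsoluteValue.nonneg]

lemma tailSum_nonneg : 0 ≤ tailSum N c :=
  tsum_nonneg fun ℓ => by positivity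

/-- low-pass part on the grid -/
def fLowG (N : ℕ) (c : ℤ → ℂ) : Fin N → ℂ :=
  fun p => ∑ ℓ ∈ Finset.Icc (-(Nt N)) (Nt N), c ℓ * ce (ℓ * tg N p)

/-- low-pass part at the sample points -/
def fLowT (N m : ℕ) (c : ℤ → ℂ) (tt : Fin m → ℝ) : Fin m → ℂ :=
  fun k => ∑ ℓ ∈ Finset.Icc (-(Nt N)) (Nt N), c ℓ * ce (ℓ * tt k)

lemma mulVec_fLowG (hN : Odd N) (hNpos : 0 < N) :
    (dirS N m tt).mulVec (fLowG N c) = fLowT N m c tt := by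
  funext k
  unfold Matrix.mulVec dotProduct fLowG fLowT
  calc ∑ p, dirS N m tt k p * ∑ ℓ ∈ Finset.Icc (-(Nt N)) (Nt N), c ℓ * ce (ℓ * tg N p)
      = ∑ p, ∑ ℓ ∈ Finset.Icc (-(Nt N)) (Nt N), c ℓ * (dirS N m tt k p * ce (ℓ * tg N p)) := by
        refine Finset.sum_congr rfl fun p _ => ?_
        rw [Finset.mul_sum]
        exact Finset.sum_congr rfl fun ℓ _ => by ring
    _ = ∑ ℓ ∈ Finset.Icc (-(Nt N)) (Nt N), c ℓ * ∑ p, dirS N m tt k p * ce (ℓ * tg N p) := by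
        rw [Finset.sum_comm]
        exact Finset.sum_congr rfl fun ℓ _ => by rw [Finset.mul_sum]
    _ = ∑ ℓ ∈ Finset.Icc (-(Nt N)) (Nt N), c ℓ * ce (ℓ * tt k) :=
        Finset.sum_congr rfl fun ℓ hℓ => by rw [dirS_ce_low N m hN hNpos tt ℓ hℓ k]

lemma abs_residual_grid (hN : Odd N) (hNpos : 0 < N)
    (hc : Summable fun ℓ : ℤ => ‖c ℓ‖) (k : Fin m) :
    ‖(dirS N m tt).mulVec (fun p => fcont c (tg N p)) k - fLowT N m c tt k‖
      ≤ tailSum N c := by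
  have h1 : (dirS N m tt).mulVec (fun p => fcont c (tg N p)) k
      = ∑' ℓ : ℤ, c ℓ * ∑ p, dirS N m tt k p * ce (ℓ * tg N p) := by
    unfold Matrix.mulVec dotProduct fcont
    calc ∑ p, dirS N m tt k p * ∑' ℓ : ℤ, c ℓ * ce (ℓ * tg N p)
        = ∑ p, ∑' ℓ : ℤ, c ℓ * (dirS N m tt k p * ce (ℓ * tg N p)) := by
          refine Finset.sum_congr rfl fun p _ => ?_
          rw [← tsum_mul_left]
          exact tsum_congr fun ℓ => by ring
      _ = ∑' ℓ : ℤ, ∑ p, c ℓ * (dirS N m tt k p * ce (ℓ * tg N p)) := by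
          refine (Summable.tsum_finsetSum fun p _ => ?_).symm
          exact ((summable_ce hc (tg N p)).mul_left (dirS N m tt k p)).congr fun ℓ => by ring
      _ = ∑' ℓ : ℤ, c ℓ * ∑ p, dirS N m tt k p * ce (ℓ * tg N p) :=
          tsum_congr fun ℓ => by rw [Finset.mul_sum]
  have h2 : fLowT N m c tt k
      = ∑' ℓ : ℤ, (if ℓ ∈ Finset.Icc (-(Nt N)) (Nt N) then c ℓ * ce (ℓ * tt k) else 0) := by
    rw [tsum_eq_sum (s := Finset.Icc (-(Nt N)) (Nt N)) (fun ℓ hℓ => if_neg hℓ)]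
    exact (Finset.sum_congr rfl fun ℓ hℓ => (if_pos hℓ)).symm
  have hs1 : Summable (fun ℓ : ℤ => c ℓ * ∑ p, dirS N m tt k p * ce (ℓ * tg N p)) := by
    apply Summable.of_norm_bounded hc
    intro ℓ
    rw [norm_mul]
    calc ‖c ℓ‖ * ‖∑ p, dirS N m tt k p * ce (ℓ * tg N p)‖
        ≤ ‖c ℓ‖ * 1 :=
          mul_le_mul_of_nonneg_left (abs_dirS_ce N m hN hNpos tt ℓ k) (norm_nonneg _)
      _ = ‖c ℓ‖ := mul_one _
  have hs2 : Summable (fun ℓ : ℤ => if ℓ ∈ Finset.Icc (-(Nt N)) (Nt N) then c ℓ * ce (ℓ * tt k) else 0) :=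
    summable_of_ne_finset_zero (s := Finset.Icc (-(Nt N)) (Nt N)) (fun ℓ hℓ => if_neg hℓ)
  rw [h1, h2, ← Summable.tsum_sub hs1 hs2]
  refine tsum_of_norm_bounded (tail_summand_summable (N := N) hc).hasSum fun ℓ => ?_
  by_cases hmem : ℓ ∈ Finset.Icc (-(Nt N)) (Nt N)
  · have hlow := dirS_ce_low N m hN hNpos tt ℓ hmem k
    have hite : ¬ (Nt N < |ℓ|) := by
      rw [Finset.mem_Icc] at hmem
      rw [not_lt, abs_le]
      omega
    rw [if_pos hmem, hlow, if_neg hite]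
    simp
  · have hite : Nt N < |ℓ| := by
      rw [Finset.mem_Icc] at hmem
      rw [lt_abs]
      omega
    rw [if_neg hmem, if_pos hite, sub_zero, norm_mul]
    calc ‖c ℓ‖ * ‖∑ p, dirS N m tt k p * ce (ℓ * tg N p)‖
        ≤ ‖c ℓ‖ * 1 :=
          mul_le_mul_of_nonneg_left (abs_dirS_ce N m hN hNpos tt ℓ k) (norm_nonneg _)
      _ = ‖c ℓ‖ := mul_one _

lemma abs_residual_tt (hc : Summable fun ℓ : ℤ => ‖c ℓ‖) (k : Fin m) :
    ‖fcont c (tt k) - fLowT N m c tt k‖ ≤ tailSum N c := by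
  have h2 : fLowT N m c tt k
      = ∑' ℓ : ℤ, (if ℓ ∈ Finset.Icc (-(Nt N)) (Nt N) then c ℓ * ce (ℓ * tt k) else 0) := by
    rw [tsum_eq_sum (s := Finset.Icc (-(Nt N)) (Nt N)) (fun ℓ hℓ => if_neg hℓ)]
    exact (Finset.sum_congr rfl fun ℓ hℓ => (if_pos hℓ)).symm
  have hs2 : Summable (fun ℓ : ℤ => if ℓ ∈ Finset.Icc (-(Nt N)) (Nt N) then c ℓ * ce (ℓ * tt k) else 0) :=
    summable_of_ne_finset_zero (s := Finset.Icc (-(Nt N)) (Nt N)) (fun ℓ hℓ => if_neg hℓ)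
  rw [fcont, h2, ← Summable.tsum_sub (summable_ce hc (tt k)) hs2]
  refine tsum_of_norm_bounded (tail_summand_summable (N := N) hc).hasSum fun ℓ => ?_
  by_cases hmem : ℓ ∈ Finset.Icc (-(Nt N)) (Nt N)
  · have hite : ¬ (Nt N < |ℓ|) := by
      rw [Finset.mem_Icc] at hmem; rw [not_lt, abs_le]; omega
    rw [if_pos hmem, if_neg hite]
    simp
  · have hite : Nt N < |ℓ| := by
      rw [Finset.mem_Icc] at hmem; rw [lt_abs]; omega
    rw [if_neg hmem, if_pos hite, sub_zero, norm_mul,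
      abs_ce, mul_one]

/-- identification of `Fin n → ℂ` with `EuclideanSpace` -/
def toE {n : ℕ} (v : Fin n → ℂ) : EuclideanSpace ℂ (Fin n) := WithLp.toLp 2 v

lemma norm2_eq {n : ℕ} (v : Fin n → ℂ) : norm2 v = ‖toE v‖ := by
  rw [EuclideanSpace.norm_eq]
  rfl

lemma norm2_nonneg {n : ℕ} (v : Fin n → ℂ) : 0 ≤ norm2 v := Real.sqrt_nonneg _

lemma norm2_le_of_forall {n : ℕ} (v : Fin n → ℂ) (C : ℝ) (hC : 0 ≤ C)
    (h : ∀ i, ‖v i‖ ≤ C) : norm2 v ≤ Real.sqrt n * C := by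
  rw [norm2]
  calc Real.sqrt (∑ i, ‖v i‖ ^ 2) ≤ Real.sqrt (∑ _i : Fin n, C ^ 2) := by
        apply Real.sqrt_le_sqrt
        exact Finset.sum_le_sum fun i _ => pow_le_pow_left₀ (norm_nonneg _) (h i) 2
    _ = Real.sqrt n * C := by
        rw [Finset.sum_const, Finset.card_univ, Fintype.card_fin, nsmul_eq_mul,
          Real.sqrt_mul (by positivity), Real.sqrt_sq hC]

open RCLike in
lemma key_proj {E : Type*} [NormedAddCommGroup E] [InnerProductSpace ℂ E] (u r : E)
    (h : ∀ t : ℝ, ‖r‖ ≤ ‖r + t • u‖) : ‖u‖ ≤ ‖u + r‖ := by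
  by_cases hu : u = 0
  · simpa [hu] using norm_nonneg r
  have hu2 : (0:ℝ) < ‖u‖ ^ 2 := pow_pos (norm_pos_iff.mpr hu) 2
  set x : ℝ := re (inner ℂ r u) with hx
  have hx0 : x = 0 := by
    set t : ℝ := -x / ‖u‖ ^ 2 with ht
    have h1 := h t
    have hinner : re (inner ℂ r (t • u)) = t * x := by
      have hs : t • u = ((t:ℂ)) • u := RCLike.real_smul_eq_coe_smul (K := ℂ) t u
      rw [hs, inner_smul_right]
      simp [hx, Complex.re_ofReal_mul]
    have hnorm : ‖t • u‖ ^ 2 = t ^ 2 * ‖u‖ ^ 2 := by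
      rw [norm_smul, Real.norm_eq_abs, mul_pow, sq_abs]
    have h2 : ‖r + t • u‖ ^ 2 = ‖r‖ ^ 2 + 2 * (t * x) + t ^ 2 * ‖u‖ ^ 2 := by
      rw [norm_add_sq (𝕜 := ℂ), hinner, hnorm]
    have h3 : ‖r‖ ^ 2 ≤ ‖r + t • u‖ ^ 2 := pow_le_pow_left₀ (norm_nonneg r) h1 2
    rw [h2] at h3
    have h4 : 0 ≤ 2 * (t * x) + t ^ 2 * ‖u‖ ^ 2 := by linarith
    have h5 : 2 * (t * x) + t ^ 2 * ‖u‖ ^ 2 = -(x ^ 2) / ‖u‖ ^ 2 := by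
      rw [ht]; field_simp; ring
    rw [h5] at h4
    have h7 : x ^ 2 ≤ 0 := by
      have h8 := mul_le_mul_of_nonneg_right h4 hu2.le
      rw [zero_mul, div_mul_cancel₀ _ hu2.ne'] at h8
      linarith
    nlinarith [sq_nonneg x]
  have h6 : ‖u + r‖ ^ 2 = ‖u‖ ^ 2 + ‖r‖ ^ 2 := by
    rw [norm_add_sq (𝕜 := ℂ), inner_re_symm, ← hx, hx0]
    ring
  nlinarith [norm_nonneg (u + r), norm_nonneg u]

end

/-- least-squares recovery bound. If `‖Sv‖₂ ≥ ‖v‖₂/δ` for all `v` and the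
sample points lie in `Ω`, then any least-squares minimizer `f♯` of `‖Sh - b‖₂` satisfies
`‖f - f♯‖₂ ≤ 2δ‖d‖₂ + 2δ√m ∑_{|ℓ|>Ñ}|c_ℓ|`. -/
theorem leastSquares_recovery_bound
    (N m : ℕ) (hN : Odd N) (hNpos : 0 < N) (hm : 0 < m)
    (c : ℤ → ℂ) (hc : Summable fun ℓ : ℤ => ‖c ℓ‖)
    (tt : Fin m → ℝ)
    (hΩ : ∀ k : Fin m, tt k ∈ Set.Ico (-(1/2) : ℝ) (1/2))
    (δ : ℝ) (hδ : 0 < δ)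
    (hlb : ∀ v : Fin N → ℂ, norm2 v / δ ≤ norm2 ((dirS N m tt).mulVec v))
    (d : Fin m → ℂ)
    (fs : Fin N → ℂ)
    (hmin : ∀ h : Fin N → ℂ,
      norm2 (fun k => (dirS N m tt).mulVec fs k - (fcont c (tt k) + d k)) ≤
      norm2 (fun k => (dirS N m tt).mulVec h k - (fcont c (tt k) + d k))) :
    norm2 (fun p => fcont c (tg N p) - fs p) ≤
      2 * δ * norm2 d + 2 * δ * Real.sqrt m * tailSum N c := by
  classical
  set S := dirS N m tt with hSdef
  set T := tailSum N c with hTdef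
  set G := fLowG N c with hGdef
  set L := fLowT N m c tt with hLdef
  set F : Fin N → ℂ := fun p => fcont c (tg N p) with hFdef
  set B : Fin m → ℂ := fun k => fcont c (tt k) + d k with hBdef
  have hT : 0 ≤ T := tailSum_nonneg
  have hlb' : ∀ v : Fin N → ℂ, norm2 v ≤ δ * norm2 (S.mulVec v) := by
    intro v
    have h := hlb v
    rw [div_le_iff₀ hδ] at h
    linarith
  have hSL : S.mulVec G = L := mulVec_fLowG hN hNpos
  -- step 1 : ‖F - G‖ ≤ δ √m T
  have hstep1 : norm2 (fun p => F p - G p) ≤ δ * (Real.sqrt m * T) := by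
    have hsub : S.mulVec (fun p => F p - G p) = fun k => S.mulVec F k - L k := by
      have he : (fun p => F p - G p) = F - G := rfl
      rw [he, Matrix.mulVec_sub, hSL]
      rfl
    calc norm2 (fun p => F p - G p) ≤ δ * norm2 (S.mulVec (fun p => F p - G p)) := hlb' _
      _ ≤ δ * (Real.sqrt m * T) := by
          apply mul_le_mul_of_nonneg_left _ hδ.le
          rw [hsub]
          exact norm2_le_of_forall _ _ hT fun k => abs_residual_grid hN hNpos hc k
  -- step 2 : ‖G - fs‖ ≤ δ (√m T + ‖d‖)
  set u : EuclideanSpace ℂ (Fin m) := toE (S.mulVec G) - toE (S.mulVec fs) with hudef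
  set r : EuclideanSpace ℂ (Fin m) := toE (S.mulVec fs) - toE B with hrdef
  have hmin' : ∀ t : ℝ, ‖r‖ ≤ ‖r + t • u‖ := by
    intro t
    have h1 := hmin (fun p => fs p + (t:ℂ) * (G p - fs p))
    have e1 : norm2 (fun k => S.mulVec fs k - (fcont c (tt k) + d k)) = ‖r‖ := by
      rw [norm2_eq]; rfl
    have e2 : S.mulVec (fun p => fs p + (t:ℂ) * (G p - fs p))
        = fun k => S.mulVec fs k + (t:ℂ) * (S.mulVec G k - S.mulVec fs k) := by
      have he : (fun p => fs p + (t:ℂ) * (G p - fs p)) = fs + (t:ℂ) • (G - fs) := rfl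
      rw [he, Matrix.mulVec_add, Matrix.mulVec_smul, Matrix.mulVec_sub]
      rfl
    have e3 : norm2 (fun k =>
          S.mulVec (fun p => fs p + (t:ℂ) * (G p - fs p)) k - (fcont c (tt k) + d k))
        = ‖r + t • u‖ := by
      rw [norm2_eq]
      congr 1
      ext k
      rw [e2]
      show (S.mulVec fs k + (t:ℂ) * (S.mulVec G k - S.mulVec fs k)) - B k
          = (S.mulVec fs k - B k) + t • (S.mulVec G k - S.mulVec fs k)
      rw [Complex.real_smul]
      push_cast
      ring
    rw [e1, e3] at h1
    exact h1
  have hkey : ‖u‖ ≤ ‖u + r‖ := key_proj u r hmin'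
  have hur : u + r = toE (fun k => L k - B k) := by
    rw [hudef, hrdef, sub_add_sub_cancel, hSL]
    rfl
  have hLB : norm2 (fun k => L k - B k) ≤ Real.sqrt m * T + norm2 d := by
    have e4 : toE (fun k => L k - B k) = toE (fun k => L k - fcont c (tt k)) - toE d := by
      ext k
      show L k - B k = (L k - fcont c (tt k)) - d k
      rw [hBdef]
      ring
    rw [norm2_eq, e4]
    calc ‖toE (fun k => L k - fcont c (tt k)) - toE d‖
        ≤ ‖toE (fun k => L k - fcont c (tt k))‖ + ‖toE d‖ := norm_sub_le _ _
      _ ≤ Real.sqrt m * T + norm2 d := by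
          rw [← norm2_eq, ← norm2_eq]
          have hb : norm2 (fun k => L k - fcont c (tt k)) ≤ Real.sqrt m * T := by
            refine norm2_le_of_forall _ _ hT fun k => ?_
            rw [show ‖L k - fcont c (tt k)‖ = ‖fcont c (tt k) - L k‖
              from (norm_sub_rev _ _)]
            exact abs_residual_tt hc k
          linarith
  have hstep2 : norm2 (fun p => G p - fs p) ≤ δ * (Real.sqrt m * T + norm2 d) := by
    calc norm2 (fun p => G p - fs p) ≤ δ * norm2 (S.mulVec (fun p => G p - fs p)) := hlb' _
      _ ≤ δ * (Real.sqrt m * T + norm2 d) := by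
          apply mul_le_mul_of_nonneg_left _ hδ.le
          have e5 : norm2 (S.mulVec (fun p => G p - fs p)) = ‖u‖ := by
            rw [norm2_eq]
            congr 1
            have he : (fun p => G p - fs p) = G - fs := rfl
            rw [he, Matrix.mulVec_sub]
            rfl
          rw [e5]
          calc ‖u‖ ≤ ‖u + r‖ := hkey
            _ = norm2 (fun k => L k - B k) := by rw [hur, ← norm2_eq]
            _ ≤ Real.sqrt m * T + norm2 d := hLB
  -- combine
  have htri : norm2 (fun p => F p - fs p)
      ≤ norm2 (fun p => F p - G p) + norm2 (fun p => G p - fs p) := by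
    rw [norm2_eq, norm2_eq, norm2_eq]
    have he : toE (fun p => F p - fs p) = toE (fun p => F p - G p) + toE (fun p => G p - fs p) := by
      ext p
      show F p - fs p = (F p - G p) + (G p - fs p)
      ring
    rw [he]
    exact norm_add_le _ _
  have hfinal := le_trans htri (add_le_add hstep1 hstep2)
  have hd2 : 0 ≤ norm2 d := norm2_nonneg d
  nlinarith [mul_nonneg hδ.le hd2]
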